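/- A chamber system X over a right-angled Coxeter group (W,Γ) is a building if and only if: (a) every ∼_γ-class has at least two elements; (b) any two elements of X are connected by a path; (c) for commuting generators γ,δ, if x and y are connected by a path of type γδ then they are connected by a path of type δγ; and (d) there is no non-trivial closed reduced path. -/

import Mathlib

variable {Γ : Type*} {X : Type*}

/-- Two generators commute: they are distinct and non-adjacent in the Coxeter graph. -/
def RACommutes (adj : Γ → Γ → Prop) (γ δ : Γ) : Prop := γ ≠ δ ∧ ¬ adj γ δ

/-- Relations of the right-angled Coxeter group: squares of generators and
commutators of commuting (non-adjacent) pairs. -/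
def coxRels (adj : Γ → Γ → Prop) : Set (FreeGroup Γ) :=
  {r | (∃ γ : Γ, r = FreeGroup.of γ * FreeGroup.of γ) ∨
    (∃ γ δ : Γ, RACommutes adj γ δ ∧
      r = FreeGroup.of γ * FreeGroup.of δ * (FreeGroup.of γ)⁻¹ * (FreeGroup.of δ)⁻¹)}

/-- The element of the right-angled Coxeter group represented by a word. -/
def evalWord (adj : Γ → Γ → Prop) (w : List Γ) : PresentedGroup (coxRels adj) :=
  (w.map (fun γ => (PresentedGroup.of γ : PresentedGroup (coxRels adj)))).prod

/-- One swap of two adjacent commuting generators. -/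
def SwapStep (adj : Γ → Γ → Prop) (w w' : List Γ) : Prop :=
  ∃ (u v : List Γ) (γ δ : Γ), RACommutes adj γ δ ∧
    w = u ++ γ :: δ :: v ∧ w' = u ++ δ :: γ :: v

/-- A word is reduced iff there is no pair of equal letters such that the letter
commutes with every letter strictly in between. -/
def GIsReduced (adj : Γ → Γ → Prop) (w : List Γ) : Prop :=
  ¬ ∃ (u v x : List Γ) (γ : Γ), w = u ++ γ :: (v ++ γ :: x) ∧
      ∀ δ ∈ v, RACommutes adj γ δ

/-- `IsPath rel w x y`: there is a path of type `w` from `x` to `y` in the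
chamber system, i.e. consecutive chambers are distinct and `∼_γᵢ`-related. -/
def IsPath (rel : Γ → X → X → Prop) : List Γ → X → X → Prop
  | [], x, y => x = y
  | γ :: w, x, y => ∃ z, x ≠ z ∧ rel γ x z ∧ IsPath rel w z y

/-- `IsPathSeq rel w p`: the sequence of chambers `p` is a path of type `w`. -/
def IsPathSeq (rel : Γ → X → X → Prop) : List Γ → List X → Prop
  | [], p => ∃ x, p = [x]
  | γ :: w, p => ∃ x y q, p = x :: y :: q ∧ x ≠ y ∧ rel γ x y ∧ IsPathSeq rel w (y :: q)

/-- A chamber system is a building if every `∼_γ`-class has at least two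
elements and, for all chambers `x, y`, there is a group element `g` such that a
reduced path of type `w` from `x` to `y` exists iff `w` represents `g`. -/
def IsBuilding (adj : Γ → Γ → Prop) (rel : Γ → X → X → Prop) : Prop :=
  (∀ (γ : Γ) (x : X), ∃ y, y ≠ x ∧ rel γ x y) ∧
  ∀ x y : X, ∃ g : PresentedGroup (coxRels adj), ∀ w : List Γ,
    GIsReduced adj w → (IsPath rel w x y ↔ evalWord adj w = g)

namespace RAB

/-- `γ` commutes with every letter of `v`. -/
def Bad (adj : Γ → Γ → Prop) (γ : Γ) (v : List Γ) : Prop := ∀ δ ∈ v, RACommutes adj γ δ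

/-- `γ` can be deleted from the front of `w` : `w = v ++ γ :: x` with `γ` commuting with `v`. -/
def Del (adj : Γ → Γ → Prop) (γ : Γ) (w : List Γ) : Prop :=
  ∃ v x, w = v ++ γ :: x ∧ Bad adj γ v

/-- Swap-equivalence of words. -/
abbrev SwEq (adj : Γ → Γ → Prop) : List Γ → List Γ → Prop := Relation.ReflTransGen (SwapStep adj)

variable {adj : Γ → Γ → Prop}

theorem racomm_symm (hsym : Symmetric adj) {γ δ : Γ} (h : RACommutes adj γ δ) :
    RACommutes adj δ γ := ⟨h.1.symm, fun hh => h.2 (hsym hh)⟩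

theorem not_reduced_iff {w : List Γ} :
    ¬ GIsReduced adj w ↔ ∃ u γ s, w = u ++ γ :: s ∧ Del adj γ s := by
  rw [GIsReduced, not_not]
  constructor
  · rintro ⟨u, v, x, γ, h, hb⟩; exact ⟨u, γ, v ++ γ :: x, h, v, x, rfl, hb⟩
  · rintro ⟨u, γ, s, h, v, x, hs, hb⟩; exact ⟨u, v, x, γ, by rw [h, hs], hb⟩

theorem bad_decomp {w u v x : List Γ} {γ : Γ} (h : w = u ++ γ :: (v ++ γ :: x))
    (hb : Bad adj γ v) : ¬ GIsReduced adj w := fun hr => hr ⟨u, v, x, γ, h, hb⟩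

theorem reduced_of_append_right {a b : List Γ} (h : GIsReduced adj (a ++ b)) :
    GIsReduced adj b := by
  rintro ⟨u, v, x, γ, hb1, hb2⟩
  exact h ⟨a ++ u, v, x, γ, by rw [hb1]; simp, hb2⟩

theorem reduced_of_append_left {a b : List Γ} (h : GIsReduced adj (a ++ b)) :
    GIsReduced adj a := by
  rintro ⟨u, v, x, γ, hb1, hb2⟩
  exact h ⟨u, v, x ++ b, γ, by rw [hb1]; simp, hb2⟩

theorem reduced_of_cons {w : List Γ} {γ : Γ} (h : GIsReduced adj (γ :: w)) :
    GIsReduced adj w := reduced_of_append_right (a := [γ]) h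

theorem reduced_reverse {w : List Γ} (h : GIsReduced adj w) :
    GIsReduced adj w.reverse := by
  rintro ⟨u, v, x, γ, h1, h2⟩
  apply h
  refine ⟨x.reverse, v.reverse, u.reverse, γ, ?_, fun δ hδ => h2 δ (List.mem_reverse.mp hδ)⟩
  have := congrArg List.reverse h1
  simp only [List.reverse_reverse, List.reverse_append, List.reverse_cons, List.append_assoc] at this
  simpa using this

theorem reduced_nil : GIsReduced adj ([] : List Γ) := by
  rintro ⟨u, v, x, γ, h, -⟩
  simp at h

theorem swapStep_append {w w' : List Γ} (h : SwapStep adj w w') (a b : List Γ) :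
    SwapStep adj (a ++ w ++ b) (a ++ w' ++ b) := by
  obtain ⟨u, v, γ, δ, hc, h1, h2⟩ := h
  exact ⟨a ++ u, v ++ b, γ, δ, hc, by simp [h1], by simp [h2]⟩

theorem swapStep_symm (hsym : Symmetric adj) {w w' : List Γ} (h : SwapStep adj w w') :
    SwapStep adj w' w := by
  obtain ⟨u, v, γ, δ, hc, h1, h2⟩ := h
  exact ⟨u, v, δ, γ, racomm_symm hsym hc, h2, h1⟩

theorem SwEq.append {w w' : List Γ} (h : SwEq adj w w') (a b : List Γ) :
    SwEq adj (a ++ w ++ b) (a ++ w' ++ b) :=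
  Relation.ReflTransGen.lift (fun w => a ++ w ++ b) (fun _ _ hs => swapStep_append hs a b) _ _ h

theorem SwEq.append_left {w w' : List Γ} (h : SwEq adj w w') (a : List Γ) :
    SwEq adj (a ++ w) (a ++ w') := by simpa using h.append a []

theorem SwEq.append_right {w w' : List Γ} (h : SwEq adj w w') (b : List Γ) :
    SwEq adj (w ++ b) (w' ++ b) := by simpa using h.append [] b

theorem SwEq.cons {w w' : List Γ} (h : SwEq adj w w') (γ : Γ) :
    SwEq adj (γ :: w) (γ :: w') := by simpa using h.append_left [γ]

theorem sweq_symm (hsym : Symmetric adj) {w w' : List Γ} (h : SwEq adj w w') :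
    SwEq adj w' w :=
  haveI : Std.Symm (SwapStep adj) := ⟨fun _ _ hs => swapStep_symm hsym hs⟩
  Std.Symm.symm _ _ h

theorem swapStep_length_eq {w w' : List Γ} (h : SwapStep adj w w') :
    w.length = w'.length := by
  obtain ⟨u, v, γ, δ, -, h1, h2⟩ := h
  simp [h1, h2]

theorem SwEq.length_eq {w w' : List Γ} (h : SwEq adj w w') : w.length = w'.length := by
  induction h with
  | refl => rfl
  | tail _ hs ih => exact ih.trans (swapStep_length_eq hs)

theorem sweq_shuffle {γ : Γ} {v s : List Γ} (hb : Bad adj γ v) :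
    SwEq adj (γ :: (v ++ s)) (v ++ γ :: s) := by
  induction v with
  | nil => exact .refl
  | cons δ v ih =>
      have h1 : SwapStep adj (γ :: δ :: (v ++ s)) (δ :: γ :: (v ++ s)) :=
        ⟨[], v ++ s, γ, δ, hb δ (by simp), rfl, rfl⟩
      have h2 : SwEq adj (δ :: (γ :: (v ++ s))) (δ :: (v ++ γ :: s)) :=
        (ih (fun δ' hδ' => hb δ' (by simp [hδ']))).cons δ
      exact (Relation.ReflTransGen.single h1).trans (by simpa using h2)

end RAB
namespace RAB

variable {adj : Γ → Γ → Prop}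

theorem rel_one {r : FreeGroup Γ} (hr : r ∈ coxRels adj) :
    PresentedGroup.mk (coxRels adj) r = 1 :=
  (QuotientGroup.eq_one_iff _).mpr (Subgroup.subset_normalClosure hr)

theorem of_mul_self (adj : Γ → Γ → Prop) (γ : Γ) :
    (PresentedGroup.of γ : PresentedGroup (coxRels adj)) * PresentedGroup.of γ = 1 := by
  have h := rel_one (adj := adj) (Or.inl ⟨γ, rfl⟩)
  rwa [map_mul] at h

theorem of_inv (adj : Γ → Γ → Prop) (γ : Γ) :
    (PresentedGroup.of γ : PresentedGroup (coxRels adj))⁻¹ = PresentedGroup.of γ :=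
  inv_eq_of_mul_eq_one_right (of_mul_self adj γ)

theorem of_comm {γ δ : Γ} (hc : RACommutes adj γ δ) :
    (PresentedGroup.of γ : PresentedGroup (coxRels adj)) * PresentedGroup.of δ =
      PresentedGroup.of δ * PresentedGroup.of γ := by
  have h := rel_one (adj := adj) (Or.inr ⟨γ, δ, hc, rfl⟩)
  rw [map_mul, map_mul, map_mul, map_inv, map_inv] at h
  have h2 : (PresentedGroup.of γ : PresentedGroup (coxRels adj)) * PresentedGroup.of δ *
      (PresentedGroup.of γ)⁻¹ * (PresentedGroup.of δ)⁻¹ = 1 := h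
  calc (PresentedGroup.of γ : PresentedGroup (coxRels adj)) * PresentedGroup.of δ
      = (PresentedGroup.of γ * PresentedGroup.of δ * (PresentedGroup.of γ)⁻¹ *
          (PresentedGroup.of δ)⁻¹) * (PresentedGroup.of δ * PresentedGroup.of γ) := by group
    _ = PresentedGroup.of δ * PresentedGroup.of γ := by rw [h2]; group

theorem evalWord_nil : evalWord adj [] = 1 := rfl

theorem evalWord_cons {γ : Γ} {w : List Γ} :
    evalWord adj (γ :: w) = PresentedGroup.of γ * evalWord adj w := by
  simp [evalWord]

theorem evalWord_singleton {γ : Γ} : evalWord adj [γ] = PresentedGroup.of γ := by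
  simp [evalWord]

theorem evalWord_append {u v : List Γ} :
    evalWord adj (u ++ v) = evalWord adj u * evalWord adj v := by
  simp [evalWord]

theorem swapStep_eval {w w' : List Γ} (h : SwapStep adj w w') :
    evalWord adj w = evalWord adj w' := by
  obtain ⟨u, v, γ, δ, hc, h1, h2⟩ := h
  subst h1 h2
  simp only [evalWord_append, evalWord_cons]
  congr 1
  rw [← mul_assoc, ← mul_assoc, of_comm hc]

theorem SwEq.eval_eq {w w' : List Γ} (h : SwEq adj w w') :
    evalWord adj w = evalWord adj w' := by
  induction h with
  | refl => rfl
  | tail _ hs ih => exact ih.trans (swapStep_eval hs)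

theorem evalWord_reverse {w : List Γ} :
    evalWord adj w.reverse = (evalWord adj w)⁻¹ := by
  induction w with
  | nil => simp [evalWord]
  | cons γ w ih =>
    rw [List.reverse_cons, evalWord_append, evalWord_cons, ih, evalWord_cons]
    rw [mul_inv_rev, of_inv]
    simp [evalWord]

theorem del_unique {w v₁ x₁ v₂ x₂ : List Γ} {γ : Γ} (h₁ : w = v₁ ++ γ :: x₁)
    (hb₁ : Bad adj γ v₁) (h₂ : w = v₂ ++ γ :: x₂) (hb₂ : Bad adj γ v₂) :
    v₁ = v₂ ∧ x₁ = x₂ := by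
  rcases List.append_eq_append_iff.mp (h₁.symm.trans h₂) with ⟨m, hm1, hm2⟩ | ⟨m, hm1, hm2⟩
  · cases m with
    | nil => simp at hm1 hm2; exact ⟨hm1.symm, hm2⟩
    | cons a m =>
      obtain ⟨ha, -⟩ := List.cons_eq_cons.mp hm2
      subst ha
      have : γ ∈ v₂ := by rw [hm1]; simp
      exact absurd (hb₂ γ this).1 (by simp)
  · cases m with
    | nil => simp at hm1 hm2; exact ⟨hm1, hm2.symm⟩
    | cons a m =>
      obtain ⟨ha, -⟩ := List.cons_eq_cons.mp hm2
      subst ha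
      have : γ ∈ v₁ := by rw [hm1]; simp
      exact absurd (hb₁ γ this).1 (by simp)

open Classical in
/-- Insert `γ` in front of `w`, performing the (unique) possible cancellation. -/
noncomputable def pA (adj : Γ → Γ → Prop) (γ : Γ) (w : List Γ) : List Γ :=
  if h : Del adj γ w then h.choose ++ h.choose_spec.choose else γ :: w

theorem pA_spec_del {γ : Γ} {w v x : List Γ} (h : w = v ++ γ :: x) (hb : Bad adj γ v) :
    pA adj γ w = v ++ x := by
  have hd : Del adj γ w := ⟨v, x, h, hb⟩
  rw [pA, dif_pos hd]
  obtain ⟨hx, hb'⟩ := hd.choose_spec.choose_spec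
  obtain ⟨h1, h2⟩ := del_unique hx hb' h hb
  exact congrArg₂ (· ++ ·) h1 h2

theorem pA_spec_not {γ : Γ} {w : List Γ} (h : ¬ Del adj γ w) : pA adj γ w = γ :: w := by
  rw [pA, dif_neg h]

theorem del_iff {γ : Γ} {w : List Γ} (hw : GIsReduced adj w) :
    Del adj γ w ↔ ¬ GIsReduced adj (γ :: w) := by
  constructor
  · rintro ⟨v, x, h, hb⟩
    exact bad_decomp (u := []) (by rw [h]; rfl) hb
  · intro h
    rcases not_reduced_iff.mp h with ⟨u, α, s, he, hd⟩
    cases u with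
    | nil =>
      obtain ⟨h1, h2⟩ := List.cons_eq_cons.mp he
      subst h1; rwa [← h2] at hd
    | cons a u =>
      obtain ⟨h1, h2⟩ := List.cons_eq_cons.mp he
      exact absurd hw (not_reduced_iff.mpr ⟨u, α, s, h2, hd⟩)

theorem not_del_of_reduced_cons {γ : Γ} {w : List Γ} (hw : GIsReduced adj (γ :: w)) :
    ¬ Del adj γ w := fun hd => (del_iff (reduced_of_cons hw)).mp hd hw

end RAB
namespace RAB

variable {adj : Γ → Γ → Prop}

theorem bad_sub {γ : Γ} {v v' : List Γ} (hb : Bad adj γ v) (hsub : ∀ δ ∈ v', δ ∈ v) :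
    Bad adj γ v' := fun δ hδ => hb δ (hsub δ hδ)

theorem bad_swap_mid {γ α β : Γ} {a m : List Γ} (hb : Bad adj γ (a ++ α :: β :: m)) :
    Bad adj γ (a ++ β :: α :: m) := by
  intro δ hδ
  apply hb δ
  simp only [List.mem_append, List.mem_cons] at hδ ⊢
  tauto

theorem del_swapStep (hsym : Symmetric adj) {γ : Γ} {w w' v x : List Γ}
    (hs : SwapStep adj w w') (h : w = v ++ γ :: x) (hb : Bad adj γ v) :
    ∃ v' x', w' = v' ++ γ :: x' ∧ Bad adj γ v' ∧ SwEq adj (v ++ x) (v' ++ x') := by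
  obtain ⟨a, b, α, β, hc, h1, h2⟩ := hs
  subst h2
  rcases List.append_eq_append_iff.mp (h.symm.trans h1) with ⟨m, hm1, hm2⟩ | ⟨m, hm1, hm2⟩
  · cases m with
    | nil =>
      simp only [List.append_nil] at hm1
      obtain ⟨hγ, hx⟩ := List.cons_eq_cons.mp hm2
      subst hγ; subst hx; subst hm1
      refine ⟨a ++ [β], b, by simp, ?_, ?_⟩
      · intro δ hδ
        rcases List.mem_append.mp hδ with h' | h'
        · exact hb δ h'
        · simp at h'; subst h'; exact hc
      · have he : (a ++ [β]) ++ b = a ++ β :: b := by simp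
        rw [he]
    | cons c m =>
      obtain ⟨hγ, hx⟩ := List.cons_eq_cons.mp hm2
      subst hγ; subst hx; subst hm1
      refine ⟨v, m ++ β :: α :: b, by simp, hb, ?_⟩
      exact Relation.ReflTransGen.single ⟨v ++ m, b, α, β, hc, by simp, by simp⟩
  · cases m with
    | nil =>
      simp only [List.append_nil] at hm1
      obtain ⟨hγ, hx⟩ := List.cons_eq_cons.mp hm2.symm
      subst hγ; subst hx; subst hm1
      refine ⟨v ++ [β], b, by simp, ?_, ?_⟩
      · intro δ hδ
        rcases List.mem_append.mp hδ with h' | h'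
        · exact hb δ h'
        · simp at h'; subst h'; exact hc
      · have he : (v ++ [β]) ++ b = v ++ β :: b := by simp
        rw [he]
    | cons c m =>
      obtain ⟨hα, h3⟩ := List.cons_eq_cons.mp hm2
      subst hα
      cases m with
      | nil =>
        obtain ⟨hγβ, hxb⟩ := List.cons_eq_cons.mp h3.symm
        subst hγβ; subst hxb; subst hm1
        refine ⟨a, α :: x, rfl, bad_sub hb (fun δ hδ => by simp [hδ]), ?_⟩
        have he : (a ++ [α]) ++ x = a ++ α :: x := by simp
        rw [he]
      | cons d m₂ =>
        obtain ⟨hβ, hb2⟩ := List.cons_eq_cons.mp h3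
        subst hβ; subst hb2; subst hm1
        refine ⟨a ++ β :: α :: m₂, x, by simp, bad_swap_mid hb, ?_⟩
        exact Relation.ReflTransGen.single ⟨a, m₂ ++ x, α, β, hc, by simp, by simp⟩

theorem del_of_swapStep (hsym : Symmetric adj) {γ : Γ} {w w' : List Γ}
    (hs : SwapStep adj w w') (hd : Del adj γ w) : Del adj γ w' := by
  obtain ⟨v, x, h, hb⟩ := hd
  obtain ⟨v', x', h', hb', -⟩ := del_swapStep hsym hs h hb
  exact ⟨v', x', h', hb'⟩

theorem not_reduced_swapStep (hsym : Symmetric adj) {w w' : List Γ}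
    (hs : SwapStep adj w w') (h : ¬ GIsReduced adj w) : ¬ GIsReduced adj w' := by
  obtain ⟨u, γ, s, hu, hdel⟩ := not_reduced_iff.mp h
  obtain ⟨a, b, α, β, hc, h1, h2⟩ := hs
  subst h2
  apply not_reduced_iff.mpr
  rcases List.append_eq_append_iff.mp (hu.symm.trans h1) with ⟨m, hm1, hm2⟩ | ⟨m, hm1, hm2⟩
  · cases m with
    | nil =>
      simp only [List.append_nil] at hm1
      obtain ⟨hγ, hss⟩ := List.cons_eq_cons.mp hm2
      subst hγ; subst hss; subst hm1
      obtain ⟨v, t, hvt, hbv⟩ := hdel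
      cases v with
      | nil =>
        simp only [List.nil_append] at hvt
        obtain ⟨hβγ, -⟩ := List.cons_eq_cons.mp hvt
        exact absurd hβγ.symm hc.1
      | cons c v' =>
        obtain ⟨hcβ, hb2⟩ := List.cons_eq_cons.mp hvt
        subst hcβ
        exact ⟨a ++ [β], γ, b, by simp, v', t, hb2,
          bad_sub hbv (fun δ hδ => by simp [hδ])⟩
    | cons c m =>
      obtain ⟨hγ, hss⟩ := List.cons_eq_cons.mp hm2
      subst hγ; subst hss; subst hm1
      refine ⟨u, γ, m ++ β :: α :: b, by simp, ?_⟩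
      exact del_of_swapStep hsym ⟨m, b, α, β, hc, rfl, rfl⟩ hdel
  · cases m with
    | nil =>
      simp only [List.append_nil] at hm1
      obtain ⟨hγ, hss⟩ := List.cons_eq_cons.mp hm2.symm
      subst hγ; subst hss; subst hm1
      obtain ⟨v, t, hvt, hbv⟩ := hdel
      cases v with
      | nil =>
        simp only [List.nil_append] at hvt
        obtain ⟨hβγ, -⟩ := List.cons_eq_cons.mp hvt
        exact absurd hβγ.symm hc.1
      | cons c v' =>
        obtain ⟨hcβ, hb2⟩ := List.cons_eq_cons.mp hvt
        subst hcβ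
        exact ⟨u ++ [β], γ, b, by simp, v', t, hb2,
          bad_sub hbv (fun δ hδ => by simp [hδ])⟩
    | cons c m =>
      obtain ⟨hα, h3⟩ := List.cons_eq_cons.mp hm2
      subst hα
      cases m with
      | nil =>
        obtain ⟨hγβ, hsb⟩ := List.cons_eq_cons.mp h3.symm
        subst hγβ; subst hsb; subst hm1
        refine ⟨a, γ, α :: s, rfl, ?_⟩
        obtain ⟨v, t, hvt, hbv⟩ := hdel
        refine ⟨α :: v, t, by rw [hvt]; rfl, ?_⟩
        intro δ hδ
        rcases List.mem_cons.mp hδ with h' | h'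
        · subst h'; exact racomm_symm hsym hc
        · exact hbv δ h'
      | cons d m₂ =>
        obtain ⟨hβ, hb2⟩ := List.cons_eq_cons.mp h3
        subst hβ; subst hb2; subst hm1
        exact ⟨a ++ β :: α :: m₂, γ, s, by simp, hdel⟩

theorem reduced_swEq (hsym : Symmetric adj) {w w' : List Γ} (h : SwEq adj w w')
    (hw : GIsReduced adj w) : GIsReduced adj w' := by
  induction h with
  | refl => exact hw
  | tail _ hs ih =>
    by_contra hh
    exact not_reduced_swapStep hsym (swapStep_symm hsym hs) hh ih

theorem pA_swapStep (hsym : Symmetric adj) {γ : Γ} {w w' : List Γ} (hs : SwapStep adj w w') :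
    SwEq adj (pA adj γ w) (pA adj γ w') := by
  by_cases hd : Del adj γ w
  · obtain ⟨v, x, h, hb⟩ := hd
    obtain ⟨v', x', h', hb', hsw⟩ := del_swapStep hsym hs h hb
    rw [pA_spec_del h hb, pA_spec_del h' hb']
    exact hsw
  · have hd' : ¬ Del adj γ w' := fun h' => hd (del_of_swapStep hsym (swapStep_symm hsym hs) h')
    rw [pA_spec_not hd, pA_spec_not hd']
    exact Relation.ReflTransGen.single (by simpa using swapStep_append hs [γ] [])

theorem pA_swEq (hsym : Symmetric adj) {γ : Γ} {w w' : List Γ} (h : SwEq adj w w') :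
    SwEq adj (pA adj γ w) (pA adj γ w') := by
  induction h with
  | refl => exact .refl
  | tail _ hs ih => exact ih.trans (pA_swapStep hsym hs)

end RAB
namespace RAB

variable {adj : Γ → Γ → Prop}

theorem pA_reduced (hsym : Symmetric adj) {γ : Γ} {w : List Γ} (hw : GIsReduced adj w) :
    GIsReduced adj (pA adj γ w) := by
  by_cases hd : Del adj γ w
  · obtain ⟨v, x, hvx, hb⟩ := hd
    rw [pA_spec_del hvx hb]
    rintro ⟨u', v', x', α, h1, h2⟩
    subst hvx
    rcases List.append_eq_append_iff.mp h1 with ⟨m, hm1, hm2⟩ | ⟨m, hm1, hm2⟩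
    · subst hm1; subst hm2
      exact hw ⟨v ++ γ :: m, v', x', α, by simp, h2⟩
    · cases m with
      | nil =>
        simp only [List.append_nil] at hm1
        subst hm1
        simp only [List.nil_append] at hm2
        subst hm2
        exact hw ⟨v ++ [γ], v', x', α, by simp, h2⟩
      | cons c m' =>
        obtain ⟨hα, h3⟩ := List.cons_eq_cons.mp hm2
        subst hα
        rcases List.append_eq_append_iff.mp h3 with ⟨k, hk1, hk2⟩ | ⟨k, hk1, hk2⟩
        · cases k with
          | nil =>
            simp only [List.append_nil] at hk1
            subst hk1
            simp only [List.nil_append] at hk2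
            subst hk2
            subst hm1
            refine hw ⟨u', m' ++ [γ], x', α, by simp, ?_⟩
            intro ε hε
            rcases List.mem_append.mp hε with h' | h'
            · exact h2 ε h'
            · simp at h'; subst h'
              exact racomm_symm hsym (hb α (by simp))
          | cons e k' =>
            obtain ⟨hαe, hx'⟩ := List.cons_eq_cons.mp hk2
            subst hαe; subst hx'; subst hk1; subst hm1
            exact hw ⟨u', v', k' ++ γ :: x, α, by simp, h2⟩
        · subst hk2; subst hm1
          refine hw ⟨u', m' ++ γ :: k, x', α, by simp, ?_⟩
          intro ε hε
          simp only [List.mem_append, List.mem_cons] at hε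
          rcases hε with h' | h' | h'
          · exact h2 ε (by simp [hk1, h'])
          · subst h'
            exact racomm_symm hsym (hb α (by simp))
          · exact h2 ε (by simp [hk1, h'])
  · rw [pA_spec_not hd]
    by_contra hh
    exact hd ((del_iff hw).mpr hh)

theorem pA_invol (hsym : Symmetric adj) {γ : Γ} {w : List Γ} (hw : GIsReduced adj w) :
    SwEq adj (pA adj γ (pA adj γ w)) w := by
  by_cases hd : Del adj γ w
  · obtain ⟨v, x, hvx, hb⟩ := hd
    rw [pA_spec_del hvx hb]
    have hnd : ¬ Del adj γ (v ++ x) := by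
      rintro ⟨v', x', h', hb'⟩
      rcases List.append_eq_append_iff.mp h' with ⟨m, hm1, hm2⟩ | ⟨m, hm1, hm2⟩
      · exact hw ⟨v, m, x', γ, by simp [hvx, hm2], bad_sub hb' (fun ε hε => by simp [hm1, hε])⟩
      · cases m with
        | nil =>
          simp only [List.nil_append] at hm2
          exact hw ⟨v, [], x', γ, by rw [hvx, ← hm2]; simp, by intro ε hε; simp at hε⟩
        | cons c m' =>
          obtain ⟨hγc, -⟩ := List.cons_eq_cons.mp hm2
          subst hγc
          exact absurd (hb γ (by rw [hm1]; simp)).1 (by simp)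
    rw [pA_spec_not hnd, hvx]
    exact sweq_shuffle hb
  · rw [pA_spec_not hd]
    rw [pA_spec_del (w := γ :: w) (v := []) (x := w) rfl (by intro ε hε; simp at hε)]
    exact .refl

theorem pA_comm_del_notdel (hsym : Symmetric adj) {γ δ : Γ} (hc : RACommutes adj γ δ)
    {w : List Γ} (hd₂ : Del adj δ w) (hd₁ : ¬ Del adj γ w) :
    pA adj γ (pA adj δ w) = pA adj δ (pA adj γ w) := by
  obtain ⟨v, x, hvx, hb⟩ := hd₂
  rw [pA_spec_del hvx hb]
  have hnd : ¬ Del adj γ (v ++ x) := by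
    rintro ⟨v', x', h', hb'⟩
    apply hd₁
    rcases List.append_eq_append_iff.mp h' with ⟨m, hm1, hm2⟩ | ⟨m, hm1, hm2⟩
    · refine ⟨v ++ δ :: m, x', by rw [hvx, hm2]; simp, ?_⟩
      intro ε hε
      simp only [List.mem_append, List.mem_cons] at hε
      rcases hε with h' | h' | h'
      · exact hb' ε (by simp [hm1, h'])
      · subst h'; exact hc
      · exact hb' ε (by simp [hm1, h'])
    · cases m with
      | nil =>
        simp only [List.append_nil] at hm1
        subst hm1
        simp only [List.nil_append] at hm2
        refine ⟨v ++ [δ], x', by rw [hvx, ← hm2]; simp, ?_⟩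
        intro ε hε
        rcases List.mem_append.mp hε with h' | h'
        · exact hb' ε h'
        · simp at h'; subst h'; exact hc
      | cons c m' =>
        obtain ⟨hγc, hx'⟩ := List.cons_eq_cons.mp hm2
        subst hγc; subst hx'; subst hm1
        exact ⟨v', m' ++ δ :: x, by rw [hvx]; simp, hb'⟩
  rw [pA_spec_not hnd, pA_spec_not hd₁]
  rw [pA_spec_del (v := γ :: v) (x := x) (by rw [hvx]; rfl) ?_]
  · rfl
  · intro ε hε
    rcases List.mem_cons.mp hε with h' | h'
    · subst h'; exact racomm_symm hsym hc
    · exact hb ε h'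

theorem pA_comm (hsym : Symmetric adj) {γ δ : Γ} (hc : RACommutes adj γ δ) (w : List Γ) :
    SwEq adj (pA adj γ (pA adj δ w)) (pA adj δ (pA adj γ w)) := by
  by_cases hd₁ : Del adj γ w <;> by_cases hd₂ : Del adj δ w
  · obtain ⟨v₁, x₁, h₁, hb₁⟩ := hd₁
    obtain ⟨v₂, x₂, h₂, hb₂⟩ := hd₂
    rcases List.append_eq_append_iff.mp (h₁.symm.trans h₂) with ⟨m, hm1, hm2⟩ | ⟨m, hm1, hm2⟩
    · cases m with
      | nil =>
        simp only [List.nil_append] at hm2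
        exact absurd (List.cons_eq_cons.mp hm2).1 hc.1
      | cons c m' =>
        obtain ⟨hγc, hx₁⟩ := List.cons_eq_cons.mp hm2
        subst hγc; subst hx₁; subst hm1
        have e1 : pA adj δ w = (v₁ ++ γ :: m') ++ x₂ := pA_spec_del h₂ hb₂
        have e2 : pA adj γ ((v₁ ++ γ :: m') ++ x₂) = v₁ ++ (m' ++ x₂) :=
          pA_spec_del (by simp) hb₁
        have e3 : pA adj γ w = v₁ ++ (m' ++ δ :: x₂) := pA_spec_del h₁ hb₁
        have e4 : pA adj δ (v₁ ++ (m' ++ δ :: x₂)) = (v₁ ++ m') ++ x₂ :=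
          pA_spec_del (by simp) (bad_sub hb₂ (fun ε hε => by
            simp only [List.mem_append, List.mem_cons] at hε ⊢; tauto))
        rw [e1, e2, e3, e4]
        have : v₁ ++ (m' ++ x₂) = (v₁ ++ m') ++ x₂ := by simp
        rw [this]
    · cases m with
      | nil =>
        simp only [List.nil_append] at hm2
        exact absurd (List.cons_eq_cons.mp hm2).1.symm hc.1
      | cons c m' =>
        obtain ⟨hδc, hx₂⟩ := List.cons_eq_cons.mp hm2
        subst hδc; subst hx₂; subst hm1
        have e1 : pA adj γ w = (v₂ ++ δ :: m') ++ x₁ := pA_spec_del h₁ hb₁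
        have e2 : pA adj δ ((v₂ ++ δ :: m') ++ x₁) = v₂ ++ (m' ++ x₁) :=
          pA_spec_del (by simp) hb₂
        have e3 : pA adj δ w = v₂ ++ (m' ++ γ :: x₁) := pA_spec_del h₂ hb₂
        have e4 : pA adj γ (v₂ ++ (m' ++ γ :: x₁)) = (v₂ ++ m') ++ x₁ :=
          pA_spec_del (by simp) (bad_sub hb₁ (fun ε hε => by
            simp only [List.mem_append, List.mem_cons] at hε ⊢; tauto))
        rw [e3, e4, e1, e2]
        have : (v₂ ++ m') ++ x₁ = v₂ ++ (m' ++ x₁) := by simp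
        rw [this]
  · rw [pA_comm_del_notdel hsym (racomm_symm hsym hc) hd₁ hd₂]
  · rw [pA_comm_del_notdel hsym hc hd₂ hd₁]
  · rw [pA_spec_not hd₂]
    have h1 : ¬ Del adj γ (δ :: w) := by
      rintro ⟨v', x', h', hb'⟩
      cases v' with
      | nil =>
        simp only [List.nil_append] at h'
        exact hc.1 (List.cons_eq_cons.mp h').1.symm
      | cons c v'' =>
        obtain ⟨-, h''⟩ := List.cons_eq_cons.mp h'
        exact hd₁ ⟨v'', x', h'', bad_sub hb' (fun ε hε => by simp [hε])⟩
    rw [pA_spec_not h1, pA_spec_not hd₁]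
    have h2 : ¬ Del adj δ (γ :: w) := by
      rintro ⟨v', x', h', hb'⟩
      cases v' with
      | nil =>
        simp only [List.nil_append] at h'
        exact hc.1 (List.cons_eq_cons.mp h').1
      | cons c v'' =>
        obtain ⟨-, h''⟩ := List.cons_eq_cons.mp h'
        exact hd₂ ⟨v'', x', h'', bad_sub hb' (fun ε hε => by simp [hε])⟩
    rw [pA_spec_not h2]
    exact Relation.ReflTransGen.single ⟨[], w, γ, δ, hc, rfl, rfl⟩

end RAB
namespace RAB

variable {adj : Γ → Γ → Prop}

/-- Setoid of reduced words up to swap-equivalence. -/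
def redSetoid (adj : Γ → Γ → Prop) (hsym : Symmetric adj) :
    Setoid {w : List Γ // GIsReduced adj w} :=
  ⟨fun a b => SwEq adj a.1 b.1,
    ⟨fun _ => .refl, fun h => sweq_symm hsym h, fun h h' => h.trans h'⟩⟩

variable (hsym : Symmetric adj)

/-- The action of a generator on swap-classes of reduced words. -/
noncomputable def qA (γ : Γ) :
    Quotient (redSetoid adj hsym) → Quotient (redSetoid adj hsym) :=
  Quotient.lift (fun a => Quotient.mk (redSetoid adj hsym) ⟨pA adj γ a.1, pA_reduced hsym a.2⟩)
    (fun _ _ hab => Quotient.sound (pA_swEq hsym hab))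

theorem qA_mk (γ : Γ) (w : List Γ) (hw : GIsReduced adj w) :
    qA hsym γ (Quotient.mk (redSetoid adj hsym) ⟨w, hw⟩) =
      Quotient.mk (redSetoid adj hsym) ⟨pA adj γ w, pA_reduced hsym hw⟩ := rfl

theorem qA_invol (γ : Γ) (q : Quotient (redSetoid adj hsym)) :
    qA hsym γ (qA hsym γ q) = q := by
  induction q using Quotient.ind with
  | _ a =>
    rw [qA_mk, qA_mk]
    exact Quotient.sound (pA_invol hsym a.2)

/-- The action as a permutation. -/
noncomputable def sigmaA (γ : Γ) : Equiv.Perm (Quotient (redSetoid adj hsym)) :=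
  ⟨qA hsym γ, qA hsym γ, qA_invol hsym γ, qA_invol hsym γ⟩

theorem sigmaA_sq (γ : Γ) : sigmaA hsym γ * sigmaA hsym γ = 1 := by
  apply Equiv.ext
  intro q
  exact qA_invol hsym γ q

theorem sigmaA_comm {γ δ : Γ} (hc : RACommutes adj γ δ) :
    sigmaA hsym γ * sigmaA hsym δ = sigmaA hsym δ * sigmaA hsym γ := by
  apply Equiv.ext
  intro q
  induction q using Quotient.ind with
  | _ a =>
    show qA hsym γ (qA hsym δ (Quotient.mk (redSetoid adj hsym) a)) =
      qA hsym δ (qA hsym γ (Quotient.mk (redSetoid adj hsym) a))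
    rw [qA_mk, qA_mk, qA_mk, qA_mk]
    exact Quotient.sound (pA_comm hsym hc a.1)

theorem sigmaA_rels : ∀ r ∈ coxRels adj, FreeGroup.lift (sigmaA hsym) r = 1 := by
  rintro r (⟨γ, rfl⟩ | ⟨γ, δ, hc, rfl⟩)
  · simp only [map_mul, FreeGroup.lift_apply_of]
    exact sigmaA_sq hsym γ
  · simp only [map_mul, map_inv, FreeGroup.lift_apply_of]
    rw [sigmaA_comm hsym hc]
    group

/-- The homomorphism from the RACG to permutations of reduced swap-classes. -/
noncomputable def phiA : PresentedGroup (coxRels adj) →* Equiv.Perm (Quotient (redSetoid adj hsym)) :=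
  PresentedGroup.toGroup (sigmaA_rels hsym)

theorem phiA_eval {w : List Γ} (hw : GIsReduced adj w) :
    phiA hsym (evalWord adj w) (Quotient.mk (redSetoid adj hsym) ⟨[], reduced_nil⟩) =
      Quotient.mk (redSetoid adj hsym) ⟨w, hw⟩ := by
  induction w with
  | nil => rw [evalWord_nil, map_one]; rfl
  | cons γ w ih =>
    rw [evalWord_cons, map_mul]
    have h1 : phiA hsym (PresentedGroup.of γ) = sigmaA hsym γ := PresentedGroup.toGroup.of _
    rw [Equiv.Perm.mul_apply, ih (reduced_of_cons hw), h1]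
    show qA hsym γ (Quotient.mk (redSetoid adj hsym) ⟨w, reduced_of_cons hw⟩) =
      Quotient.mk (redSetoid adj hsym) ⟨γ :: w, hw⟩
    rw [qA_mk]
    apply Quotient.sound
    show SwEq adj (pA adj γ w) (γ :: w)
    rw [pA_spec_not (not_del_of_reduced_cons hw)]

/-- Tits' theorem for right-angled Coxeter groups: reduced words representing the
same group element are swap-equivalent. -/
theorem tits (hsym : Symmetric adj) {w w' : List Γ} (hw : GIsReduced adj w)
    (hw' : GIsReduced adj w') (he : evalWord adj w = evalWord adj w') : SwEq adj w w' := by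
  have h1 := phiA_eval hsym hw
  rw [he, phiA_eval hsym hw'] at h1
  exact sweq_symm hsym (Quotient.exact h1)

theorem exists_reduced_eval (hsym : Symmetric adj) :
    ∀ (n : ℕ) (w : List Γ), w.length ≤ n →
      ∃ w', GIsReduced adj w' ∧ evalWord adj w' = evalWord adj w := by
  intro n
  induction n with
  | zero =>
    intro w hl
    obtain rfl : w = [] := List.eq_nil_of_length_eq_zero (Nat.le_zero.mp hl)
    exact ⟨[], reduced_nil, rfl⟩
  | succ n ih =>
    intro w hl
    by_cases hr : GIsReduced adj w
    · exact ⟨w, hr, rfl⟩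
    · obtain ⟨u, γ, s, hu, v, x, hs, hb⟩ := not_reduced_iff.mp hr
      have heq : evalWord adj w = evalWord adj (u ++ (v ++ x)) := by
        rw [hu, hs]
        rw [evalWord_append, evalWord_append]
        congr 1
        have hsw : SwEq adj (γ :: (v ++ γ :: x)) (v ++ γ :: γ :: x) :=
          sweq_shuffle hb
        rw [show evalWord adj (γ :: (v ++ γ :: x)) = evalWord adj (v ++ γ :: γ :: x) from
          hsw.eval_eq]
        rw [evalWord_append, evalWord_append, evalWord_cons, evalWord_cons]
        rw [← mul_assoc (PresentedGroup.of γ) (PresentedGroup.of γ), of_mul_self adj γ, one_mul]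
      obtain ⟨w', hw1, hw2⟩ := ih (u ++ (v ++ x)) (by
        have : w.length = u.length + v.length + x.length + 2 := by
          rw [hu, hs]; simp only [List.length_append, List.length_cons]; omega
        simp only [List.length_append]
        omega)
      exact ⟨w', hw1, hw2.trans heq.symm⟩

theorem exists_word (adj : Γ → Γ → Prop) (g : PresentedGroup (coxRels adj)) :
    ∃ w : List Γ, evalWord adj w = g := by
  induction g using PresentedGroup.induction_on with
  | _ z =>
    induction z using FreeGroup.induction_on with
    | C1 => exact ⟨[], by rw [evalWord_nil, map_one]⟩
    | of γ => exact ⟨[γ], evalWord_singleton⟩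
    | inv_of γ _ =>
      refine ⟨[γ], ?_⟩
      rw [map_inv, show ((PresentedGroup.mk (coxRels adj)) (FreeGroup.of γ) :
        PresentedGroup (coxRels adj)) = PresentedGroup.of γ from rfl, of_inv]
      exact evalWord_singleton
    | mul a b ha hb =>
      obtain ⟨w1, h1⟩ := ha
      obtain ⟨w2, h2⟩ := hb
      exact ⟨w1 ++ w2, by rw [evalWord_append, map_mul, h1, h2]⟩

end RAB
namespace RAB

variable {adj : Γ → Γ → Prop} {rel : Γ → X → X → Prop}

theorem reduced_pair {γ δ : Γ} (hne : γ ≠ δ) : GIsReduced adj [γ, δ] := by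
  rintro ⟨u, v, x, α, h, -⟩
  have hl := congrArg List.length h
  simp only [List.length_cons, List.length_append, List.length_nil] at hl
  obtain rfl : u = [] := List.eq_nil_of_length_eq_zero (by omega)
  obtain rfl : v = [] := List.eq_nil_of_length_eq_zero (by omega)
  obtain rfl : x = [] := List.eq_nil_of_length_eq_zero (by omega)
  simp only [List.nil_append, List.append_nil] at h
  obtain ⟨h1, h2⟩ := List.cons_eq_cons.mp h
  obtain ⟨h3, -⟩ := List.cons_eq_cons.mp h2
  exact hne (h1.trans h3.symm)

theorem isPath_append {u v : List Γ} {x y : X} :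
    IsPath rel (u ++ v) x y ↔ ∃ z, IsPath rel u x z ∧ IsPath rel v z y := by
  induction u generalizing x with
  | nil =>
    constructor
    · intro h; exact ⟨x, rfl, h⟩
    · rintro ⟨z, hz, h⟩
      obtain rfl : x = z := hz
      exact h
  | cons γ u ih =>
    constructor
    · rintro ⟨z, hxz, hr, hp⟩
      obtain ⟨t, h1, h2⟩ := ih.mp hp
      exact ⟨t, ⟨z, hxz, hr, h1⟩, h2⟩
    · rintro ⟨t, ⟨z, hxz, hr, h1⟩, h2⟩
      exact ⟨z, hxz, hr, ih.mpr ⟨t, h1, h2⟩⟩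

theorem isPath_reverse (heq : ∀ γ, Equivalence (rel γ)) {w : List Γ} {x y : X}
    (h : IsPath rel w x y) : IsPath rel w.reverse y x := by
  induction w generalizing x with
  | nil => exact (h : x = y).symm
  | cons γ w ih =>
    obtain ⟨z, hxz, hr, hp⟩ := h
    rw [List.reverse_cons]
    exact isPath_append.mpr ⟨z, ih hp, ⟨x, Ne.symm hxz, (heq γ).symm hr, rfl⟩⟩

theorem isPath_swapStep
    (hcm : ∀ γ δ : Γ, RACommutes adj γ δ → ∀ x y : X,
      IsPath rel [γ, δ] x y → IsPath rel [δ, γ] x y)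
    {w w' : List Γ} (hs : SwapStep adj w w') {x y : X} (h : IsPath rel w x y) :
    IsPath rel w' x y := by
  obtain ⟨u, v, γ, δ, hcc, h1, h2⟩ := hs
  subst h1; subst h2
  obtain ⟨a, hu, hrest⟩ := isPath_append.mp h
  obtain ⟨b, hab, hγ, c, hbc, hδ, hcv⟩ := hrest
  have h2 : IsPath rel [δ, γ] a c := hcm γ δ hcc a c ⟨b, hab, hγ, c, hbc, hδ, rfl⟩
  obtain ⟨b', hab', hδ', c', hbc', hγ', hcc'⟩ := h2
  refine isPath_append.mpr ⟨a, hu, ?_⟩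
  exact ⟨b', hab', hδ', c', hbc', hγ', by rw [show c' = c from hcc']; exact hcv⟩

theorem isPath_swEq
    (hcm : ∀ γ δ : Γ, RACommutes adj γ δ → ∀ x y : X,
      IsPath rel [γ, δ] x y → IsPath rel [δ, γ] x y)
    {w w' : List Γ} (h : SwEq adj w w') {x y : X} : IsPath rel w x y → IsPath rel w' x y := by
  induction h with
  | refl => exact id
  | tail _ hs ih => exact fun hp => isPath_swapStep hcm hs (ih hp)

theorem exists_reduced_path (heq : ∀ γ, Equivalence (rel γ))
    (hcm : ∀ γ δ : Γ, RACommutes adj γ δ → ∀ x y : X,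
      IsPath rel [γ, δ] x y → IsPath rel [δ, γ] x y) :
    ∀ (n : ℕ) (w : List Γ) (x y : X), w.length ≤ n → IsPath rel w x y →
      ∃ w', GIsReduced adj w' ∧ IsPath rel w' x y := by
  intro n
  induction n with
  | zero =>
    intro w x y hl hp
    obtain rfl : w = [] := List.eq_nil_of_length_eq_zero (Nat.le_zero.mp hl)
    exact ⟨[], reduced_nil, hp⟩
  | succ n ih =>
    intro w x y hl hp
    by_cases hr : GIsReduced adj w
    · exact ⟨w, hr, hp⟩
    obtain ⟨u, γ, s, hu, v, t, hs, hb⟩ := not_reduced_iff.mp hr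
    subst hs; subst hu
    have hsw : SwEq adj (u ++ γ :: (v ++ γ :: t)) ((u ++ v) ++ γ :: γ :: t) := by
      have h1 := (sweq_shuffle (s := γ :: t) hb).append_left u
      have e : u ++ (v ++ γ :: γ :: t) = (u ++ v) ++ γ :: γ :: t := by simp
      rw [← e]
      exact h1
    have hp2 := isPath_swEq hcm hsw hp
    obtain ⟨a, hua, hrest⟩ := isPath_append.mp hp2
    obtain ⟨b, hab, h1, c, hbc, h2, ht⟩ := hrest
    have hac : rel γ a c := (heq γ).trans h1 h2
    have hlen : u.length + v.length + t.length + 2 ≤ n + 1 := by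
      have := hl
      simp only [List.length_append, List.length_cons] at this
      omega
    by_cases hacc : a = c
    · subst hacc
      refine ih ((u ++ v) ++ t) x y ?_ (isPath_append.mpr ⟨a, hua, ht⟩)
      simp only [List.length_append]
      omega
    · refine ih ((u ++ v) ++ γ :: t) x y ?_ (isPath_append.mpr ⟨a, hua, c, hacc, hac, ht⟩)
      simp only [List.length_append, List.length_cons]
      omega

theorem evals_agree (hsym : Symmetric adj) (heq : ∀ γ, Equivalence (rel γ))
    (hcm : ∀ γ δ : Γ, RACommutes adj γ δ → ∀ x y : X,
      IsPath rel [γ, δ] x y → IsPath rel [δ, γ] x y)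
    (hd : ∀ (w : List Γ) (x : X), GIsReduced adj w → IsPath rel w x x → w = []) :
    ∀ (n : ℕ) (w w' : List Γ) (x y : X), w.length + w'.length ≤ n →
      GIsReduced adj w → GIsReduced adj w' → IsPath rel w x y → IsPath rel w' x y →
      evalWord adj w = evalWord adj w' := by
  intro n
  induction n with
  | zero =>
    intro w w' x y hl _ _ _ _
    obtain rfl : w = [] := List.eq_nil_of_length_eq_zero (by omega)
    obtain rfl : w' = [] := List.eq_nil_of_length_eq_zero (by omega)
    rfl
  | succ n ih =>
    intro w w' x y hl hw hw' hp hp'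
    have hpt : IsPath rel (w'.reverse ++ w) y y :=
      isPath_append.mpr ⟨x, isPath_reverse heq hp', hp⟩
    by_cases hrt : GIsReduced adj (w'.reverse ++ w)
    · have h0 := hd _ y hrt hpt
      obtain ⟨h2, rfl⟩ := List.append_eq_nil_iff.mp h0
      obtain rfl : w' = [] := by simpa using congrArg List.reverse h2
      rfl
    · obtain ⟨u0, γ, s, h1, t0, t, h2, hb⟩ := not_reduced_iff.mp hrt
      subst h2
      have hcore : ∀ (u v₁ v₂ s : List Γ), w'.reverse = u ++ γ :: v₁ → Bad adj γ v₁ →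
          w = v₂ ++ γ :: s → Bad adj γ v₂ → evalWord adj w = evalWord adj w' := by
        intro u v₁ v₂ s hwr hb₁ hwv hb₂
        have hsww : SwEq adj w (γ :: (v₂ ++ s)) := by
          rw [hwv]; exact sweq_symm hsym (sweq_shuffle hb₂)
        have hred2 : GIsReduced adj (γ :: (v₂ ++ s)) := reduced_swEq hsym hsww hw
        have hpw2 : IsPath rel (γ :: (v₂ ++ s)) x y := isPath_swEq hcm hsww hp
        obtain ⟨z, hxz, hrz, hpr⟩ := hpw2
        have hredr : GIsReduced adj (v₂ ++ s) := reduced_of_cons hred2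
        have hw'eq : w' = v₁.reverse ++ γ :: u.reverse := by
          rw [← List.reverse_reverse w', hwr]
          simp
        have hb₁' : Bad adj γ v₁.reverse := fun δ hδ => hb₁ δ (List.mem_reverse.mp hδ)
        have hsww' : SwEq adj w' (γ :: (v₁.reverse ++ u.reverse)) := by
          rw [hw'eq]; exact sweq_symm hsym (sweq_shuffle hb₁')
        have hred2' : GIsReduced adj (γ :: (v₁.reverse ++ u.reverse)) :=
          reduced_swEq hsym hsww' hw'
        have hpw2' : IsPath rel (γ :: (v₁.reverse ++ u.reverse)) x y :=
          isPath_swEq hcm hsww' hp'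
        obtain ⟨z', hxz', hrz', hpr'⟩ := hpw2'
        have hredr' : GIsReduced adj (v₁.reverse ++ u.reverse) := reduced_of_cons hred2'
        have hlw : w.length = (v₂ ++ s).length + 1 := by
          rw [hwv]; simp only [List.length_append, List.length_cons]; omega
        have hlw' : w'.length = (v₁.reverse ++ u.reverse).length + 1 := by
          rw [hw'eq]; simp only [List.length_append, List.length_cons]; omega
        by_cases hzz : z = z'
        · subst hzz
          have he := ih (v₂ ++ s) (v₁.reverse ++ u.reverse) z y (by omega) hredr hredr' hpr hpr'
          calc evalWord adj w = evalWord adj (γ :: (v₂ ++ s)) := hsww.eval_eq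
            _ = PresentedGroup.of γ * evalWord adj (v₂ ++ s) := evalWord_cons
            _ = PresentedGroup.of γ * evalWord adj (v₁.reverse ++ u.reverse) := by rw [he]
            _ = evalWord adj (γ :: (v₁.reverse ++ u.reverse)) := evalWord_cons.symm
            _ = evalWord adj w' := (hsww'.eval_eq).symm
        · have hrelzz : rel γ z z' := (heq γ).trans ((heq γ).symm hrz) hrz'
          have hp₁ : IsPath rel (γ :: (v₁.reverse ++ u.reverse)) z y := ⟨z', hzz, hrelzz, hpr'⟩
          have hp₂ : IsPath rel (γ :: (v₂ ++ s)) z' y :=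
            ⟨z, Ne.symm hzz, (heq γ).symm hrelzz, hpr⟩
          have e₁ := ih (v₂ ++ s) (γ :: (v₁.reverse ++ u.reverse)) z y
            (by simp only [List.length_cons]; omega) hredr hred2' hpr hp₁
          have e₂ := ih (v₁.reverse ++ u.reverse) (γ :: (v₂ ++ s)) z' y
            (by simp only [List.length_cons]; omega) hredr' hred2 hpr' hp₂
          have l₁ := (tits hsym hredr hred2' e₁).length_eq
          have l₂ := (tits hsym hredr' hred2 e₂).length_eq
          simp only [List.length_cons] at l₁ l₂
          omega
      rcases List.append_eq_append_iff.mp h1 with ⟨m, hm1, hm2⟩ | ⟨m, hm1, hm2⟩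
      · exact absurd hw (bad_decomp hm2 hb)
      · cases m with
        | nil =>
          simp only [List.nil_append] at hm2
          exact absurd hw (bad_decomp (u := []) (by simpa using hm2.symm) hb)
        | cons c m' =>
          obtain ⟨hγc, h3⟩ := List.cons_eq_cons.mp hm2
          subst hγc
          rcases List.append_eq_append_iff.mp h3 with ⟨k, hk1, hk2⟩ | ⟨k, hk1, hk2⟩
          · cases k with
            | nil =>
              simp only [List.append_nil] at hk1
              subst hk1
              simp only [List.nil_append] at hk2
              exact hcore u0 m' [] t hm1 hb hk2.symm (by intro δ hδ; simp at hδ)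
            | cons e k' =>
              obtain ⟨hγe, hk2'⟩ := List.cons_eq_cons.mp hk2
              subst hγe; subst hk2'; subst hk1
              exact absurd (reduced_reverse hw') (bad_decomp hm1 hb)
          · subst hk1
            exact hcore u0 m' k t hm1 (bad_sub hb fun δ h => by simp [h]) hk2
              (bad_sub hb fun δ h => by simp [h])

end RAB

/-- A chamber system over a right-angled Coxeter group is a building iff:
(a) every `∼_γ`-class has at least two elements; (b) any two chambers are
connected by a path; (c) for commuting generators `γ, δ`, chambers connected by
a path of type `γδ` are connected by a path of type `δγ`; and (d) there is no
non-trivial closed reduced path. -/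
theorem building_iff [Fintype Γ]
    (adj : Γ → Γ → Prop) (hsym : Symmetric adj) (hirr : Irreflexive adj)
    (rel : Γ → X → X → Prop) (heq : ∀ γ, Equivalence (rel γ)) :
    IsBuilding adj rel ↔
      ((∀ (γ : Γ) (x : X), ∃ y, y ≠ x ∧ rel γ x y) ∧
       (∀ x y : X, ∃ w : List Γ, IsPath rel w x y) ∧
       (∀ γ δ : Γ, RACommutes adj γ δ →
         ∀ x y : X, IsPath rel [γ, δ] x y → IsPath rel [δ, γ] x y) ∧
       (∀ (w : List Γ) (x : X), GIsReduced adj w → IsPath rel w x x → w = [])) := by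
  
  constructor
  · rintro ⟨hthick, hg⟩
    refine ⟨hthick, ?_, ?_, ?_⟩
    · intro x y
      obtain ⟨g, hgspec⟩ := hg x y
      obtain ⟨w0, he0⟩ := RAB.exists_word adj g
      obtain ⟨w, hwred, hwe⟩ := RAB.exists_reduced_eval hsym w0.length w0 le_rfl
      exact ⟨w, (hgspec w hwred).mpr (by rw [hwe, he0])⟩
    · intro γ δ hcm x y hp
      obtain ⟨g, hgspec⟩ := hg x y
      have h1 : GIsReduced adj [γ, δ] := RAB.reduced_pair hcm.1
      have h2 : GIsReduced adj [δ, γ] := RAB.reduced_pair (Ne.symm hcm.1)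
      have he : evalWord adj [δ, γ] = evalWord adj [γ, δ] := by
        simp only [RAB.evalWord_cons, RAB.evalWord_nil, mul_one]
        exact (RAB.of_comm hcm).symm
      exact (hgspec _ h2).mpr (he.trans ((hgspec _ h1).mp hp))
    · intro w x hr hp
      obtain ⟨g, hgspec⟩ := hg x x
      have h0 : evalWord adj [] = g := (hgspec [] RAB.reduced_nil).mp rfl
      have h1 : evalWord adj w = g := (hgspec w hr).mp hp
      have h2 := RAB.tits hsym hr RAB.reduced_nil (h1.trans h0.symm)
      have h3 := h2.length_eq
      exact List.eq_nil_of_length_eq_zero (by simpa using h3)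
  · rintro ⟨hthick, hconn, hcm, hclosed⟩
    refine ⟨hthick, ?_⟩
    intro x y
    obtain ⟨w₁, hp₁⟩ := hconn x y
    obtain ⟨w₀, hw₀red, hp₀⟩ := RAB.exists_reduced_path heq hcm w₁.length w₁ x y le_rfl hp₁
    refine ⟨evalWord adj w₀, fun w hwred => ⟨?_, ?_⟩⟩
    · intro hp
      exact RAB.evals_agree hsym heq hcm hclosed (w.length + w₀.length) w w₀ x y le_rfl
        hwred hw₀red hp hp₀
    · intro he
      exact RAB.isPath_swEq hcm (RAB.tits hsym hw₀red hwred he.symm) hp₀
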